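/- The commutator of the second-order operator Σ_{i,j≥1} i·j·p_{i+j+1}·∂ᵢ∂ⱼ with E₂ satisfies [Σ_{i,j≥1} i·j·p_{i+j+1}·∂ᵢ∂ⱼ, E₂] = Σ_{i,j≥1} i·j·p_{i+j+2}·∂ᵢ∂ⱼ as R-linear operators on A. -/

import Mathlib

/- R = ℚ[α], A = R[p₁,p₂,…].
   [Σ_{i,j≥1} ij·p_{i+j+1}·∂ᵢ∂ⱼ, E₂] = Σ_{i,j≥1} ij·p_{i+j+2}·∂ᵢ∂ⱼ. -/

open MvPolynomial

noncomputable section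

abbrev R : Type := Polynomial ℚ
abbrev A : Type := MvPolynomial ℕ+ R

/-- the power-sum generator pᵢ (i ≥ 1) -/
def p (i : ℕ+) : A := X i

/-- the partial derivative ∂/∂pᵢ -/
def d (i : ℕ+) (f : A) : A := pderiv i f

/-- E₂ = Σ_{i≥1} i·p_{i+1}·∂ᵢ -/
def E₂ (f : A) : A := ∑ᶠ i : ℕ+, ((i : ℕ) : R) • (p (i + 1) * d i f)

/-- the second-order operator Σ_{i,j≥1} ij·p_{i+j+1}·∂ᵢ∂ⱼ -/
def T (f : A) : A :=
  ∑ᶠ i : ℕ+, ∑ᶠ j : ℕ+, (((i : ℕ) : R) * ((j : ℕ) : R)) • (p (i + j + 1) * d i (d j f))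


lemma d_add (i : ℕ+) (g h : A) : d i (g + h) = d i g + d i h := map_add _ _ _
lemma d_smul (i : ℕ+) (c : R) (g : A) : d i (c • g) = c • d i g :=
  map_smul (pderiv i).toLinearMap _ _
lemma d_zero (i : ℕ+) : d i (0 : A) = 0 := map_zero _
lemma d_sum (i : ℕ+) {ι : Type*} (s : Finset ι) (g : ι → A) :
    d i (∑ k ∈ s, g k) = ∑ k ∈ s, d i (g k) := map_sum (pderiv i).toLinearMap _ _

lemma d_comm (i j : ℕ+) (g : A) : d i (d j g) = d j (d i g) := by
  unfold d
  induction g using MvPolynomial.induction_on' with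
  | monomial s a =>
      simp only [pderiv_monomial]
      by_cases h : i = j
      · subst h; rfl
      · rw [Finsupp.tsub_apply, Finsupp.tsub_apply,
          Finsupp.single_eq_of_ne' h, Finsupp.single_eq_of_ne' (Ne.symm h),
          tsub_zero, tsub_zero, tsub_tsub, tsub_tsub, add_comm (Finsupp.single j 1),
          mul_right_comm]
  | add f g hf hg => simp [hf, hg]

lemma d_not_mem (i : ℕ+) (g : A) (h : i ∉ g.vars) : d i g = 0 :=
  pderiv_eq_zero_of_notMem_vars h

lemma d_mul_p (i k : ℕ+) (g : A) :
    d i (p k * g) = (if k = i then g else 0) + p k * d i g := by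
  classical
  unfold d p
  rw [pderiv_mul]
  by_cases h : k = i
  · subst h; simp
  · simp [pderiv_X_of_ne h, h]

lemma vars_d_subset (i : ℕ+) (g : A) : (d i g).vars ⊆ g.vars := by
  classical
  unfold d
  conv_lhs => rw [g.as_sum]
  rw [map_sum]
  refine (vars_sum_subset _ _).trans ?_
  intro j hj
  simp only [Finset.mem_biUnion] at hj
  obtain ⟨s, hs, hjs⟩ := hj
  rw [pderiv_monomial] at hjs
  by_cases hc : (coeff s g * (s i) : R) = 0
  · rw [hc] at hjs; simp at hjs
  · rw [vars_monomial hc] at hjs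
    exact (mem_vars j).mpr ⟨s, hs, Finsupp.support_tsub hjs⟩

lemma vars_smul_subset (c : R) (g : A) : (c • g).vars ⊆ g.vars := by
  classical
  rw [smul_eq_C_mul]
  exact (vars_mul _ _).trans (by simp [vars_C])

lemma E2_eq (g : A) (S : Finset ℕ+) (h : g.vars ⊆ S) :
    E₂ g = ∑ i ∈ S, ((i : ℕ) : R) • (p (i + 1) * d i g) := by
  apply finsum_eq_sum_of_support_subset
  intro i hi
  simp only [Function.mem_support, ne_eq] at hi
  by_contra hiS
  apply hi
  rw [d_not_mem i g (fun hv => hiS (h hv))]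
  simp

lemma T_eq (g : A) (S : Finset ℕ+) (h : g.vars ⊆ S) :
    T g = ∑ i ∈ S, ∑ j ∈ S,
      (((i : ℕ) : R) * ((j : ℕ) : R)) • (p (i + j + 1) * d i (d j g)) := by
  have inner : ∀ i : ℕ+,
      (∑ᶠ j : ℕ+, (((i : ℕ) : R) * ((j : ℕ) : R)) • (p (i + j + 1) * d i (d j g)))
      = ∑ j ∈ S, (((i : ℕ) : R) * ((j : ℕ) : R)) • (p (i + j + 1) * d i (d j g)) := by
    intro i
    apply finsum_eq_sum_of_support_subset
    intro j hj
    simp only [Function.mem_support, ne_eq] at hj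
    by_contra hjS
    apply hj
    rw [d_not_mem j g (fun hv => hjS (h hv)), d_zero]
    simp
  rw [T]
  have outer : (∑ᶠ i : ℕ+, ∑ᶠ j : ℕ+,
        (((i : ℕ) : R) * ((j : ℕ) : R)) • (p (i + j + 1) * d i (d j g)))
      = ∑ i ∈ S, ∑ᶠ j : ℕ+, (((i : ℕ) : R) * ((j : ℕ) : R)) • (p (i + j + 1) * d i (d j g)) := by
    apply finsum_eq_sum_of_support_subset
    intro i hi
    simp only [Function.mem_support, ne_eq] at hi
    by_contra hiS
    apply hi
    have hz : ∀ j : ℕ+, d i (d j g) = 0 := by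
      intro j
      rw [d_comm, d_not_mem i g (fun hv => hiS (h hv)), d_zero]
    simp only [hz, mul_zero, smul_zero]
    exact finsum_zero
  rw [outer]
  exact Finset.sum_congr rfl fun i _ => inner i

lemma vars_E2_subset (g : A) (S : Finset ℕ+) (h : g.vars ⊆ S) :
    (E₂ g).vars ⊆ S ∪ S.image (· + 1) := by
  classical
  rw [E2_eq g g.vars (le_refl _)]
  refine (vars_sum_subset _ _).trans ?_
  intro j hj
  simp only [Finset.mem_biUnion] at hj
  obtain ⟨i, hi, hji⟩ := hj
  have := (vars_smul_subset _ _).trans ((vars_mul _ _).trans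
    (Finset.union_subset_union (le_refl (p (i+1)).vars) (vars_d_subset i g))) hji
  rw [p, vars_X] at this
  rcases Finset.mem_union.mp this with h1 | h2
  · exact Finset.mem_union_right _ (Finset.mem_image.mpr
      ⟨i, h hi, by simpa using (Finset.mem_singleton.mp h1).symm⟩)
  · exact Finset.mem_union_left _ (h h2)

lemma vars_T_subset (g : A) (S : Finset ℕ+) (h : g.vars ⊆ S) :
    (T g).vars ⊆ S ∪ (S ×ˢ S).image (fun q => q.1 + q.2 + 1) := by
  classical
  rw [T_eq g g.vars (le_refl _)]
  refine (vars_sum_subset _ _).trans ?_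
  intro k hk
  simp only [Finset.mem_biUnion] at hk
  obtain ⟨i, hi, hk⟩ := hk
  replace hk := vars_sum_subset _ _ hk
  simp only [Finset.mem_biUnion] at hk
  obtain ⟨j, hj, hk⟩ := hk
  have := (vars_smul_subset _ _).trans ((vars_mul _ _).trans
    (Finset.union_subset_union (le_refl (p (i+j+1)).vars)
      ((vars_d_subset i _).trans (vars_d_subset j g)))) hk
  rw [p, vars_X] at this
  rcases Finset.mem_union.mp this with h1 | h2
  · exact Finset.mem_union_right _ (Finset.mem_image.mpr
      ⟨(i, j), Finset.mem_product.mpr ⟨h hi, h hj⟩,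
        by simpa using (Finset.mem_singleton.mp h1).symm⟩)
  · exact Finset.mem_union_left _ (h h2)

theorem commutator_T_E2 (f : A) :
    T (E₂ f) - E₂ (T f)
      = ∑ᶠ i : ℕ+, ∑ᶠ j : ℕ+,
          (((i : ℕ) : R) * ((j : ℕ) : R)) • (p (i + j + 2) * d i (d j f)) := by
  classical
  obtain ⟨N, hN⟩ := f.vars.exists_le
  set S : Finset ℕ+ := Finset.Icc 1 (2 * N + 2) with hS
  have mem_S : ∀ x : ℕ+, x ∈ S ↔ (x : ℕ) ≤ 2 * (N : ℕ) + 2 := by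
    intro x
    rw [hS, Finset.mem_Icc, and_iff_right x.one_le, ← PNat.coe_le_coe]
    push_cast
    omega
  have hvN : ∀ x ∈ f.vars, (x : ℕ) ≤ (N : ℕ) := fun x hx => (PNat.coe_le_coe x N).mpr (hN x hx)
  have hfS : f.vars ⊆ S := fun x hx => (mem_S x).mpr (by have := hvN x hx; omega)
  have bd1 : ∀ k : ℕ+, k + 1 ∉ S → d k f = 0 := by
    intro k hk
    apply d_not_mem
    intro hv
    apply hk
    rw [mem_S]
    have := hvN k hv
    push_cast
    omega
  have bd2 : ∀ i j : ℕ+, i + j + 1 ∉ S → d i (d j f) = 0 := by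
    intro i j h
    by_cases hj : j ∈ f.vars
    · by_cases hi : i ∈ f.vars
      · exact absurd ((mem_S _).mpr (by have := hvN i hi; have := hvN j hj; push_cast; omega)) h
      · rw [d_comm, d_not_mem i f hi, d_zero]
    · rw [d_not_mem j f hj, d_zero]
  have hIccN : f.vars ⊆ Finset.Icc 1 N := fun x hx => Finset.mem_Icc.mpr ⟨x.one_le, hN x hx⟩
  have hE2S : (E₂ f).vars ⊆ S := by
    refine (vars_E2_subset f (Finset.Icc 1 N) hIccN).trans ?_
    intro x hx
    rw [mem_S]
    rcases Finset.mem_union.mp hx with h | h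
    · have := (Finset.mem_Icc.mp h).2
      rw [← PNat.coe_le_coe] at this
      omega
    · obtain ⟨y, hy, rfl⟩ := Finset.mem_image.mp h
      have := (Finset.mem_Icc.mp hy).2
      rw [← PNat.coe_le_coe] at this
      push_cast
      omega
  have hTS : (T f).vars ⊆ S := by
    refine (vars_T_subset f (Finset.Icc 1 N) hIccN).trans ?_
    intro x hx
    rw [mem_S]
    rcases Finset.mem_union.mp hx with h | h
    · have := (Finset.mem_Icc.mp h).2
      rw [← PNat.coe_le_coe] at this
      omega
    · obtain ⟨q, hq, rfl⟩ := Finset.mem_image.mp h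
      obtain ⟨h1, h2⟩ := Finset.mem_product.mp hq
      have := (Finset.mem_Icc.mp h1).2
      have := (Finset.mem_Icc.mp h2).2
      rw [← PNat.coe_le_coe] at *
      push_cast
      omega
  -- index identities
  have idx1 : ∀ i k : ℕ+, i + (k + 1) + 1 = i + k + 2 := by
    intro i k; rw [← PNat.coe_inj]; push_cast; omega
  have idx2 : ∀ j k : ℕ+, (k + 1) + j + 1 = j + k + 2 := by
    intro j k; rw [← PNat.coe_inj]; push_cast; omega
  have idx3 : ∀ i j : ℕ+, (i + j + 1) + 1 = i + j + 2 := by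
    intro i j; rw [← PNat.coe_inj]; push_cast; omega
  have idx4 : ∀ a b : ℕ+, b + a + 2 = a + b + 2 := by
    intro a b; rw [← PNat.coe_inj]; push_cast; omega
  -- second derivative of E₂ f
  have hdd : ∀ i j : ℕ+, d i (d j (E₂ f))
      = ∑ k ∈ S, ((k : ℕ) : R) •
          ((if k + 1 = j then d i (d k f) else 0)
            + ((if k + 1 = i then d j (d k f) else 0) + p (k + 1) * d i (d j (d k f)))) := by
    intro i j
    rw [E2_eq f S hfS, d_sum, d_sum]
    refine Finset.sum_congr rfl fun k _ => ?_
    rw [d_smul, d_mul_p, d_smul, d_add, d_mul_p]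
    congr 1
    congr 1
    split <;> simp [d_zero]
  have hdT : ∀ k : ℕ+, d k (T f)
      = ∑ i ∈ S, ∑ j ∈ S, (((i : ℕ) : R) * ((j : ℕ) : R)) •
          ((if i + j + 1 = k then d i (d j f) else 0) + p (i + j + 1) * d k (d i (d j f))) := by
    intro k
    rw [T_eq f S hfS, d_sum]
    refine Finset.sum_congr rfl fun i _ => ?_
    rw [d_sum]
    refine Finset.sum_congr rfl fun j _ => ?_
    rw [d_smul, d_mul_p]
  -- split T (E₂ f) into three triple sums
  have hsplit : T (E₂ f)
      = (∑ i ∈ S, ∑ j ∈ S, ∑ k ∈ S,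
          (if k + 1 = j then (((i:ℕ):R) * ((j:ℕ):R) * ((k:ℕ):R)) • (p (i+j+1) * d i (d k f)) else 0))
        + ((∑ i ∈ S, ∑ j ∈ S, ∑ k ∈ S,
          (if k + 1 = i then (((i:ℕ):R) * ((j:ℕ):R) * ((k:ℕ):R)) • (p (i+j+1) * d j (d k f)) else 0))
        + (∑ i ∈ S, ∑ j ∈ S, ∑ k ∈ S,
          (((i:ℕ):R) * ((j:ℕ):R) * ((k:ℕ):R)) • (p (i+j+1) * (p (k+1) * d i (d j (d k f)))))) := by
    rw [T_eq (E₂ f) S hE2S]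
    have key : ∀ i j : ℕ+,
        (((i:ℕ):R) * ((j:ℕ):R)) • (p (i+j+1) * d i (d j (E₂ f)))
        = ∑ k ∈ S,
            ((if k + 1 = j then (((i:ℕ):R) * ((j:ℕ):R) * ((k:ℕ):R)) • (p (i+j+1) * d i (d k f)) else 0)
             + ((if k + 1 = i then (((i:ℕ):R) * ((j:ℕ):R) * ((k:ℕ):R)) • (p (i+j+1) * d j (d k f)) else 0)
             + (((i:ℕ):R) * ((j:ℕ):R) * ((k:ℕ):R)) • (p (i+j+1) * (p (k+1) * d i (d j (d k f)))))) := by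
      intro i j
      rw [hdd i j, Finset.mul_sum, Finset.smul_sum]
      refine Finset.sum_congr rfl fun k _ => ?_
      split_ifs <;> · simp only [smul_eq_C_mul, map_mul, mul_add, add_zero, zero_add, mul_zero]; ring
    simp only [key, Finset.sum_add_distrib]
  -- split E₂ (T f) into two triple sums
  have hsplitB : E₂ (T f)
      = (∑ k ∈ S, ∑ i ∈ S, ∑ j ∈ S,
          (if i + j + 1 = k then (((k:ℕ):R) * (((i:ℕ):R) * ((j:ℕ):R))) • (p (k+1) * d i (d j f)) else 0))
        + (∑ k ∈ S, ∑ i ∈ S, ∑ j ∈ S,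
          (((k:ℕ):R) * (((i:ℕ):R) * ((j:ℕ):R))) • (p (k+1) * (p (i+j+1) * d k (d i (d j f))))) := by
    rw [E2_eq (T f) S hTS]
    have key : ∀ k : ℕ+, ((k:ℕ):R) • (p (k+1) * d k (T f))
        = ∑ i ∈ S, ∑ j ∈ S,
            ((if i + j + 1 = k then (((k:ℕ):R) * (((i:ℕ):R) * ((j:ℕ):R))) • (p (k+1) * d i (d j f)) else 0)
             + (((k:ℕ):R) * (((i:ℕ):R) * ((j:ℕ):R))) • (p (k+1) * (p (i+j+1) * d k (d i (d j f))))) := by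
      intro k
      rw [hdT k, Finset.mul_sum, Finset.smul_sum]
      refine Finset.sum_congr rfl fun i _ => ?_
      rw [Finset.mul_sum, Finset.smul_sum]
      refine Finset.sum_congr rfl fun j _ => ?_
      split_ifs <;> · simp only [smul_eq_C_mul, map_mul, mul_add, add_zero, zero_add, mul_zero]; ring
    simp only [key, Finset.sum_add_distrib]
  -- collapse A1
  have hA1 : (∑ i ∈ S, ∑ j ∈ S, ∑ k ∈ S,
        (if k + 1 = j then (((i:ℕ):R) * ((j:ℕ):R) * ((k:ℕ):R)) • (p (i+j+1) * d i (d k f)) else 0))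
      = ∑ i ∈ S, ∑ j ∈ S,
        (((i:ℕ):R) * (((j+1 : ℕ+):ℕ):R) * ((j:ℕ):R)) • (p (i+j+2) * d i (d j f)) := by
    refine Finset.sum_congr rfl fun i _ => ?_
    rw [Finset.sum_comm]
    refine Finset.sum_congr rfl fun k _ => ?_
    rw [Finset.sum_ite_eq]
    by_cases hk : k + 1 ∈ S
    · rw [if_pos hk, idx1]
    · rw [if_neg hk, bd1 k hk, d_zero, mul_zero, smul_zero]
  -- collapse A2
  have hA2 : (∑ i ∈ S, ∑ j ∈ S, ∑ k ∈ S,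
        (if k + 1 = i then (((i:ℕ):R) * ((j:ℕ):R) * ((k:ℕ):R)) • (p (i+j+1) * d j (d k f)) else 0))
      = ∑ i ∈ S, ∑ j ∈ S,
        ((((j+1 : ℕ+):ℕ):R) * ((i:ℕ):R) * ((j:ℕ):R)) • (p (i+j+2) * d i (d j f)) := by
    rw [Finset.sum_comm]
    refine Finset.sum_congr rfl fun j _ => ?_
    rw [Finset.sum_comm]
    refine Finset.sum_congr rfl fun k _ => ?_
    rw [Finset.sum_ite_eq]
    by_cases hk : k + 1 ∈ S
    · rw [if_pos hk, idx2]
    · rw [if_neg hk, bd1 k hk, d_zero, mul_zero, smul_zero]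
  -- collapse B1
  have hB1 : (∑ k ∈ S, ∑ i ∈ S, ∑ j ∈ S,
        (if i + j + 1 = k then (((k:ℕ):R) * (((i:ℕ):R) * ((j:ℕ):R))) • (p (k+1) * d i (d j f)) else 0))
      = ∑ i ∈ S, ∑ j ∈ S,
        ((((i+j+1 : ℕ+):ℕ):R) * (((i:ℕ):R) * ((j:ℕ):R))) • (p (i+j+2) * d i (d j f)) := by
    rw [Finset.sum_comm]
    refine Finset.sum_congr rfl fun i _ => ?_
    rw [Finset.sum_comm]
    refine Finset.sum_congr rfl fun j _ => ?_
    rw [Finset.sum_ite_eq]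
    by_cases hk : i + j + 1 ∈ S
    · rw [if_pos hk, idx3]
    · rw [if_neg hk, bd2 i j hk]
      simp [d_zero]
  -- triple sums cancel
  have hA3B2 : (∑ k ∈ S, ∑ i ∈ S, ∑ j ∈ S,
        (((k:ℕ):R) * (((i:ℕ):R) * ((j:ℕ):R))) • (p (k+1) * (p (i+j+1) * d k (d i (d j f)))))
      = ∑ i ∈ S, ∑ j ∈ S, ∑ k ∈ S,
        (((i:ℕ):R) * ((j:ℕ):R) * ((k:ℕ):R)) • (p (i+j+1) * (p (k+1) * d i (d j (d k f)))) := by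
    rw [Finset.sum_comm]
    refine Finset.sum_congr rfl fun i _ => ?_
    rw [Finset.sum_comm]
    refine Finset.sum_congr rfl fun j _ => ?_
    refine Finset.sum_congr rfl fun k _ => ?_
    rw [d_comm k i, d_comm k j]
    simp only [smul_eq_C_mul, map_mul]
    ring
  -- symmetrize A1
  have hsym : (∑ i ∈ S, ∑ j ∈ S,
        (((i:ℕ):R) * (((j+1 : ℕ+):ℕ):R) * ((j:ℕ):R)) • (p (i+j+2) * d i (d j f)))
      = ∑ i ∈ S, ∑ j ∈ S,
        (((j:ℕ):R) * (((i+1 : ℕ+):ℕ):R) * ((i:ℕ):R)) • (p (i+j+2) * d i (d j f)) := by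
    rw [Finset.sum_comm]
    refine Finset.sum_congr rfl fun a _ => ?_
    refine Finset.sum_congr rfl fun b _ => ?_
    rw [d_comm b a, idx4]
  -- RHS as finite sum
  have hRHS : (∑ᶠ i : ℕ+, ∑ᶠ j : ℕ+,
        (((i : ℕ) : R) * ((j : ℕ) : R)) • (p (i + j + 2) * d i (d j f)))
      = ∑ i ∈ S, ∑ j ∈ S, (((i:ℕ):R) * ((j:ℕ):R)) • (p (i+j+2) * d i (d j f)) := by
    have inner : ∀ i : ℕ+, (∑ᶠ j : ℕ+, (((i : ℕ) : R) * ((j : ℕ) : R)) • (p (i + j + 2) * d i (d j f)))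
        = ∑ j ∈ S, (((i : ℕ) : R) * ((j : ℕ) : R)) • (p (i + j + 2) * d i (d j f)) := by
      intro i
      apply finsum_eq_sum_of_support_subset
      intro j hj
      simp only [Function.mem_support, ne_eq] at hj
      by_contra hjS
      exact hj (by rw [d_not_mem j f (fun hv => hjS (hfS hv)), d_zero]; simp)
    have outer : (∑ᶠ i : ℕ+, ∑ᶠ j : ℕ+, (((i : ℕ) : R) * ((j : ℕ) : R)) • (p (i + j + 2) * d i (d j f)))
        = ∑ i ∈ S, ∑ᶠ j : ℕ+, (((i : ℕ) : R) * ((j : ℕ) : R)) • (p (i + j + 2) * d i (d j f)) := by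
      apply finsum_eq_sum_of_support_subset
      intro i hi
      simp only [Function.mem_support, ne_eq] at hi
      by_contra hiS
      apply hi
      have hz : ∀ j : ℕ+, d i (d j f) = 0 := fun j => by
        rw [d_comm, d_not_mem i f (fun hv => hiS (hfS hv)), d_zero]
      simp only [hz, mul_zero, smul_zero]
      exact finsum_zero
    rw [outer]
    exact Finset.sum_congr rfl fun i _ => inner i
  -- final assembly
  rw [hsplit, hsplitB, hA1, hA2, hB1, hA3B2, hsym, hRHS]
  rw [show ∀ a b c e : A, (a + (b + c)) - (e + c) = a + b - e from fun a b c e => by ring]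
  rw [← Finset.sum_add_distrib, ← Finset.sum_sub_distrib]
  refine Finset.sum_congr rfl fun i _ => ?_
  rw [← Finset.sum_add_distrib, ← Finset.sum_sub_distrib]
  refine Finset.sum_congr rfl fun j _ => ?_
  rw [← add_smul, ← sub_smul]
  congr 1
  push_cast
  ring
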